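/- Let X be a Banach space, A : ℤ → B(X) invertible operators admitting a nonuniform dichotomy with projections P_n: i.e., P_m 𝒜(m,n) = 𝒜(m,n) P_n, ‖𝒜(m,n)P_n‖ ≤ K (h_m/h_n)^a μ_{|n|}^ε for m ≥ n, and ‖𝒜(m,n)Q_n‖ ≤ K (k_n/k_m)^{-b} ν_{|n|}^ε for m ≤ n, where Q_n = id - P_n, a < 0 ≤ b. Suppose lim_{m→∞} k_m^{-b} ν_{|m|}^ε = 0. If (z_m)_{m ≥ n} is a bounded solution of z_{m+1} = (A_m + B_m) z_m with ‖B_m‖ ≤ c ν_{|m+1|}^{-ω-ε} and ∑_{τ≥n} ν_{|τ+1|}^{-ω} < ∞, then Q_n z_n = -∑_{τ=n}^{∞} 𝒜(n,τ+1) Q_{τ+1} B_τ z_τ, and consequently z_m = 𝒜(m,n) P_n z_n + ∑_{τ=n}^{m-1} 𝒜(m,τ+1) P_{τ+1} B_τ z_τ - ∑_{τ=m}^{∞} 𝒜(m,τ+1) Q_{τ+1} B_τ z_τ for all m ≥ n. -/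

import Mathlib

open Filter

/-- A growth rate on `ℤ`. -/
def IsGrowthRate (u : ℤ → ℝ) : Prop :=
  StrictMono u ∧ u 0 = 1 ∧ Tendsto u atTop atTop ∧ Tendsto u atBot (nhds 0)

lemma IsGrowthRate.pos {u : ℤ → ℝ} (hu : IsGrowthRate u) (m : ℤ) : 0 < u m := by
  have h0 : (0:ℝ) ≤ u (m - 1) := by
    refine le_of_tendsto hu.2.2.2 ?_
    filter_upwards [eventually_le_atBot (m - 1)] with x hx
    exact hu.1.monotone hx
  have := hu.1 (show m - 1 < m by omega)
  linarith

lemma Int.Ico_succ_insert {p q : ℤ} (h : p ≤ q) :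
    Finset.Ico p (q + 1) = insert q (Finset.Ico p q) := by
  ext x
  simp only [Finset.mem_Ico, Finset.mem_insert]
  omega

theorem stmt10 {X : Type*} [NormedAddCommGroup X] [NormedSpace ℝ X] [CompleteSpace X]
    (A : ℤ → X →L[ℝ] X) (𝓐 : ℤ → ℤ → X →L[ℝ] X)
    (hcoc : ∀ m n k : ℤ, (𝓐 m n).comp (𝓐 n k) = 𝓐 m k)
    (hid : ∀ n : ℤ, 𝓐 n n = ContinuousLinearMap.id ℝ X)
    (hstep : ∀ m : ℤ, 𝓐 (m + 1) m = A m)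
    (P : ℤ → X →L[ℝ] X)
    (hproj : ∀ n, (P n).comp (P n) = P n)
    (hcomm : ∀ m n, (P m).comp (𝓐 m n) = (𝓐 m n).comp (P n))
    (h k μ ν : ℤ → ℝ) (hh : IsGrowthRate h) (hk : IsGrowthRate k)
    (hμ : IsGrowthRate μ) (hν : IsGrowthRate ν)
    (K a b ε : ℝ) (hK : 0 < K) (ha : a < 0) (hb : 0 ≤ b) (hε : 0 ≤ ε)
    (hbound1 : ∀ m n, n ≤ m → ‖(𝓐 m n).comp (P n)‖ ≤ K * (h m / h n) ^ a * μ |n| ^ ε)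
    (hbound2 : ∀ m n, m ≤ n →
      ‖(𝓐 m n).comp (ContinuousLinearMap.id ℝ X - P n)‖ ≤ K * (k n / k m) ^ (-b) * ν |n| ^ ε)
    (hlim : Tendsto (fun m : ℤ => k m ^ (-b) * ν |m| ^ ε) atTop (nhds 0))
    (B : ℤ → X →L[ℝ] X) (c ω : ℝ) (hc : 0 < c) (hω : 1 < ω)
    (hB : ∀ m : ℤ, ‖B m‖ ≤ c * ν |m + 1| ^ (-(ω + ε)))
    (n : ℤ)
    (hsum : Summable (fun τ : ℕ => ν |n + τ + 1| ^ (-ω)))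
    (z : ℤ → X) (M : ℝ) (hbdd : ∀ m, n ≤ m → ‖z m‖ ≤ M)
    (hz : ∀ m, n ≤ m → z (m + 1) = A m (z m) + B m (z m)) :
    (ContinuousLinearMap.id ℝ X - P n) (z n)
        = -∑' τ : ℕ, (𝓐 n (n + τ + 1))
            ((ContinuousLinearMap.id ℝ X - P (n + τ + 1)) (B (n + τ) (z (n + τ)))) ∧
      ∀ m, n ≤ m → z m = (𝓐 m n) (P n (z n))
        + ∑ τ ∈ Finset.Ico n m, (𝓐 m (τ + 1)) (P (τ + 1) (B τ (z τ)))
        - ∑' τ : ℕ, (𝓐 m (m + τ + 1))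
            ((ContinuousLinearMap.id ℝ X - P (m + τ + 1)) (B (m + τ) (z (m + τ)))) := by
  set Q : ℤ → X →L[ℝ] X := fun j => ContinuousLinearMap.id ℝ X - P j with hQdef
  have hM0 : 0 ≤ M := le_trans (norm_nonneg _) (hbdd n le_rfl)
  -- pointwise cocycle facts
  have hAA : ∀ p q r : ℤ, ∀ x : X, 𝓐 p q (𝓐 q r x) = 𝓐 p r x := by
    intro p q r x
    have := congrArg (fun T : X →L[ℝ] X => T x) (hcoc p q r)
    simpa using this
  have hAinv : ∀ p q : ℤ, ∀ x : X, 𝓐 p q (𝓐 q p x) = x := by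
    intro p q x
    rw [hAA p q p x, hid]
    rfl
  have hQcomm : ∀ p q : ℤ, ∀ x : X, Q p (𝓐 p q x) = 𝓐 p q (Q q x) := by
    intro p q x
    have hP := congrArg (fun T : X →L[ℝ] X => T x) (hcomm p q)
    simp only [ContinuousLinearMap.comp_apply] at hP
    simp [hQdef, ContinuousLinearMap.sub_apply, hP, map_sub]
  have hPcomm : ∀ p q : ℤ, ∀ x : X, P p (𝓐 p q x) = 𝓐 p q (P q x) := by
    intro p q x
    have hP := congrArg (fun T : X →L[ℝ] X => T x) (hcomm p q)
    simpa using hP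
  -- variation of constants with arbitrary base point p ≥ n
  have hvoc : ∀ p, n ≤ p → ∀ m, p ≤ m →
      z m = 𝓐 m p (z p) + ∑ τ ∈ Finset.Ico p m, 𝓐 m (τ + 1) (B τ (z τ)) := by
    intro p hp
    refine Int.le_induction ?_ ?_
    · simp [hid]
    · intro m hm ih
      have hnm : n ≤ m := le_trans hp hm
      rw [hz m hnm, ← hstep m]
      rw [Int.Ico_succ_insert hm, Finset.sum_insert (by simp)]
      nth_rewrite 1 [ih]
      rw [map_add, map_sum]
      have h1 : 𝓐 (m + 1) m (𝓐 m p (z p)) = 𝓐 (m + 1) p (z p) := hAA _ _ _ _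
      have h2 : ∀ τ ∈ Finset.Ico p m,
          𝓐 (m + 1) m (𝓐 m (τ + 1) (B τ (z τ))) = 𝓐 (m + 1) (τ + 1) (B τ (z τ)) :=
        fun τ _ => hAA _ _ _ _
      rw [h1, Finset.sum_congr rfl h2]
      have h3 : 𝓐 (m + 1) (m + 1) (B m (z m)) = B m (z m) := by rw [hid]; rfl
      rw [h3]
      abel
  -- Q-projected variation of constants
  have hQvoc : ∀ p, n ≤ p → ∀ m, p ≤ m →
      Q m (z m) = 𝓐 m p (Q p (z p)) + ∑ τ ∈ Finset.Ico p m, 𝓐 m (τ + 1) (Q (τ + 1) (B τ (z τ))) := by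
    intro p hp m hm
    rw [hvoc p hp m hm, map_add, map_sum, hQcomm]
    congr 1
    exact Finset.sum_congr rfl fun τ _ => hQcomm _ _ _
  -- P-projected variation of constants
  have hPvoc : ∀ m, n ≤ m →
      P m (z m) = 𝓐 m n (P n (z n)) + ∑ τ ∈ Finset.Ico n m, 𝓐 m (τ + 1) (P (τ + 1) (B τ (z τ))) := by
    intro m hm
    rw [hvoc n le_rfl m hm, map_add, map_sum, hPcomm]
    congr 1
    exact Finset.sum_congr rfl fun τ _ => hPcomm _ _ _
  -- the key backward-solving lemma
  have key : ∀ p, n ≤ p →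
      Q p (z p) = -∑' τ : ℕ, 𝓐 p (p + τ + 1) (Q (p + τ + 1) (B (p + τ) (z (p + τ)))) := by
    intro p hp
    set f : ℕ → X := fun τ => 𝓐 p (p + τ + 1) (Q (p + τ + 1) (B (p + τ) (z (p + τ)))) with hfdef
    -- norm estimate on the summand
    have hfbound : ∀ τ : ℕ, ‖f τ‖ ≤ (K * c * M) * ν |p + τ + 1| ^ (-ω) := by
      intro τ
      set σ : ℤ := p + τ + 1 with hσ
      have hpσ : p ≤ σ := by omega
      have hf1 : f τ = ((𝓐 p σ).comp (Q σ)) (B (p + τ) (z (p + τ))) := rfl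
      have hνpos : 0 < ν |σ| := hν.pos _
      have h1 : ‖f τ‖ ≤ ‖(𝓐 p σ).comp (Q σ)‖ * ‖B (p + τ) (z (p + τ))‖ := by
        rw [hf1]; exact ((𝓐 p σ).comp (Q σ)).le_opNorm _
      have h2 : ‖B (p + τ) (z (p + τ))‖ ≤ (c * ν |σ| ^ (-(ω + ε))) * M := by
        calc ‖B (p + τ) (z (p + τ))‖ ≤ ‖B (p + τ)‖ * ‖z (p + τ)‖ := (B (p + τ)).le_opNorm _
          _ ≤ (c * ν |p + τ + 1| ^ (-(ω + ε))) * M := by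
              apply mul_le_mul (hB (p + τ)) (hbdd (p + τ) (by omega)) (norm_nonneg _)
              positivity
      have h3 : ‖(𝓐 p σ).comp (Q σ)‖ ≤ K * ν |σ| ^ ε := by
        have := hbound2 p σ hpσ
        have hk1 : (k σ / k p) ^ (-b) ≤ 1 := by
          apply Real.rpow_le_one_of_one_le_of_nonpos
          · rw [le_div_iff₀ (hk.pos p)]
            simpa using (hk.1.monotone hpσ)
          · linarith
        calc ‖(𝓐 p σ).comp (Q σ)‖ ≤ K * (k σ / k p) ^ (-b) * ν |σ| ^ ε := this
          _ ≤ K * 1 * ν |σ| ^ ε := by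
              apply mul_le_mul_of_nonneg_right _ (le_of_lt (Real.rpow_pos_of_pos hνpos _))
              exact mul_le_mul_of_nonneg_left hk1 (le_of_lt hK)
          _ = K * ν |σ| ^ ε := by ring
      calc ‖f τ‖ ≤ (K * ν |σ| ^ ε) * ((c * ν |σ| ^ (-(ω + ε))) * M) := by
            refine le_trans h1 (mul_le_mul h3 h2 (norm_nonneg _) ?_)
            positivity
        _ = (K * c * M) * (ν |σ| ^ ε * ν |σ| ^ (-(ω + ε))) := by ring
        _ = (K * c * M) * ν |σ| ^ (-ω) := by
            rw [← Real.rpow_add hνpos]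
            ring_nf
    -- summability
    have hsum' : Summable (fun τ : ℕ => (K * c * M) * ν |p + τ + 1| ^ (-ω)) := by
      have hd : ∃ d : ℕ, p = n + d := ⟨(p - n).toNat, by omega⟩
      obtain ⟨d, rfl⟩ := hd
      have : Summable (fun τ : ℕ => ν |n + (τ + d : ℕ) + 1| ^ (-ω)) :=
        (summable_nat_add_iff d).mpr hsum
      have heq : (fun τ : ℕ => ν |n + d + τ + 1| ^ (-ω))
          = fun τ : ℕ => ν |n + (τ + d : ℕ) + 1| ^ (-ω) := by
        funext τ; congr 2; push_cast; ring
      exact (heq ▸ this).mul_left (K * c * M)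
    have hfs : Summable f := Summable.of_norm_bounded hsum' hfbound
    -- partial sums equal boundary term minus Q p z p
    have hpartial : ∀ N : ℕ, ∑ j ∈ Finset.range N, f j
        = 𝓐 p (p + N) (Q (p + N) (z (p + N))) - Q p (z p) := by
      intro N
      have hrange : ∑ j ∈ Finset.range N, f j
          = ∑ τ ∈ Finset.Ico p (p + N), 𝓐 p (τ + 1) (Q (τ + 1) (B τ (z τ))) := by
        induction N with
        | zero => simp
        | succ N ih =>
          rw [Finset.sum_range_succ, ih]
          have : (p + (N + 1 : ℕ) : ℤ) = (p + N) + 1 := by push_cast; ring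
          rw [this, Int.Ico_succ_insert (by omega), Finset.sum_insert (by simp)]
          have : f N = 𝓐 p ((p + N) + 1) (Q ((p + N) + 1) (B (p + N) (z (p + N)))) := by
            simp only [hfdef]
          rw [this]
          abel
      have hq := hQvoc p hp (p + N) (by omega)
      have := congrArg (𝓐 p (p + N)) hq
      rw [map_add, hAinv, map_sum] at this
      have hsums : ∀ τ ∈ Finset.Ico p (p + (N:ℤ)),
          𝓐 p (p + N) (𝓐 (p + N) (τ + 1) (Q (τ + 1) (B τ (z τ))))
            = 𝓐 p (τ + 1) (Q (τ + 1) (B τ (z τ))) := fun τ _ => hAA _ _ _ _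
      rw [Finset.sum_congr rfl hsums] at this
      rw [hrange, eq_sub_iff_add_eq, add_comm]
      exact this.symm
    -- the boundary term tends to 0
    have hbdry : Tendsto (fun m : ℤ => 𝓐 p m (Q m (z m))) atTop (nhds 0) := by
      have hDpos : (0:ℝ) < (k p) ^ (-b) := Real.rpow_pos_of_pos (hk.pos p) _
      apply squeeze_zero_norm'
        (a := fun m : ℤ => (K * M / (k p) ^ (-b)) * (k m ^ (-b) * ν |m| ^ ε))
      · filter_upwards [eventually_ge_atTop p] with m hm
        have h1 : ‖𝓐 p m (Q m (z m))‖ ≤ ‖(𝓐 p m).comp (Q m)‖ * ‖z m‖ :=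
          ((𝓐 p m).comp (Q m)).le_opNorm _
        have h2 : ‖(𝓐 p m).comp (Q m)‖ ≤ K * (k m / k p) ^ (-b) * ν |m| ^ ε := hbound2 p m hm
        have h3 : (k m / k p) ^ (-b) = k m ^ (-b) / k p ^ (-b) :=
          Real.div_rpow (le_of_lt (hk.pos m)) (le_of_lt (hk.pos p)) _
        calc ‖𝓐 p m (Q m (z m))‖ ≤ (K * (k m / k p) ^ (-b) * ν |m| ^ ε) * M := by
              refine le_trans h1 (mul_le_mul h2 (hbdd m (le_trans hp hm)) (norm_nonneg _) ?_)
              have : (0:ℝ) < K * (k m / k p) ^ (-b) * ν |m| ^ ε := by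
                have := Real.rpow_pos_of_pos (div_pos (hk.pos m) (hk.pos p)) (-b)
                have := Real.rpow_pos_of_pos (hν.pos |m|) ε
                positivity
              linarith
          _ = (K * M / (k p) ^ (-b)) * (k m ^ (-b) * ν |m| ^ ε) := by
              rw [h3]; field_simp
      · have := hlim.const_mul (K * M / (k p) ^ (-b))
        simpa using this
    -- combine
    have hNat : Tendsto (fun N : ℕ => (p + N : ℤ)) atTop atTop :=
      tendsto_atTop_add_const_left _ p tendsto_natCast_atTop_atTop
    have hb1 : Tendsto (fun N : ℕ => 𝓐 p (p + N) (Q (p + N) (z (p + N)))) atTop (nhds 0) :=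
      hbdry.comp hNat
    have hb2 : Tendsto (fun N : ℕ => ∑ j ∈ Finset.range N, f j) atTop (nhds (0 - Q p (z p))) := by
      simp only [hpartial]
      exact hb1.sub tendsto_const_nhds
    have hb3 : Tendsto (fun N : ℕ => ∑ j ∈ Finset.range N, f j) atTop (nhds (∑' j, f j)) :=
      hfs.hasSum.tendsto_sum_nat
    have : (∑' j, f j) = 0 - Q p (z p) := tendsto_nhds_unique hb3 hb2
    rw [this]
    abel
  constructor
  · exact key n le_rfl
  · intro m hm
    have hsplit : z m = P m (z m) + Q m (z m) := by
      simp [hQdef, ContinuousLinearMap.sub_apply]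
    rw [hsplit, hPvoc m hm, key m hm]
    abel
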